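/- For κ > 0 and m > 0, setting r = √(2/3)·κ^{-1/2}, the two quantities α₁² = m/(4r³(1-κr²)^{3/2}) and α₂² = 2m(1 - κρ²/2)/(ρ³(1-κρ²/4)^{3/2}(1-κr²)) with ρ² = 2r² are equal, and both are positive. -/

import Mathlib

theorem square_re_angular_velocities (κ m : ℝ) (hκ : 0 < κ) (hm : 0 < m)
    (r ρ2 α1sq α2sq : ℝ)
    (hr : r = Real.sqrt (2 / 3) * κ⁻¹ ^ ((1:ℝ)/2))
    (hρ : ρ2 = 2 * r ^ 2)
    (h1 : α1sq = m / (4 * r ^ 3 * (1 - κ * r ^ 2) ^ ((3:ℝ)/2)))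
    (h2 : α2sq = 2 * m * (1 - κ * ρ2 / 2) /
      (ρ2 ^ ((3:ℝ)/2) * (1 - κ * ρ2 / 4) ^ ((3:ℝ)/2) * (1 - κ * r ^ 2))) :
    α1sq = α2sq ∧ 0 < α1sq ∧ 0 < α2sq := by
  have hκ' : (0:ℝ) < κ⁻¹ := inv_pos.mpr hκ
  have hr0 : 0 < r := by
    rw [hr]
    have h1 : 0 < Real.sqrt (2/3) := Real.sqrt_pos.mpr (by norm_num)
    have h2 : 0 < κ⁻¹ ^ ((1:ℝ)/2) := Real.rpow_pos_of_pos hκ' _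
    positivity
  have hr2 : κ * r ^ 2 = 2/3 := by
    rw [hr, mul_pow, Real.sq_sqrt (by norm_num : (0:ℝ) ≤ 2/3),
      ← Real.rpow_natCast (κ⁻¹ ^ ((1:ℝ)/2)) 2, ← Real.rpow_mul hκ'.le]
    norm_num
    field_simp
  have hkr : 1 - κ * r ^ 2 = 1/3 := by rw [hr2]; norm_num
  have hρκ : κ * ρ2 = 4/3 := by rw [hρ]; rw [show κ * (2 * r^2) = 2 * (κ * r^2) by ring, hr2]; norm_num
  have hρ32 : ρ2 ^ ((3:ℝ)/2) = 2 ^ ((3:ℝ)/2) * r ^ 3 := by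
    rw [hρ, Real.mul_rpow (by norm_num) (sq_nonneg r)]
    congr 1
    rw [← Real.rpow_natCast r 2, ← Real.rpow_mul hr0.le]
    norm_num
  have h43 : (2:ℝ) ^ ((3:ℝ)/2) * (2/3 : ℝ) ^ ((3:ℝ)/2) = 8 * (1/3 : ℝ) ^ ((3:ℝ)/2) := by
    rw [← Real.mul_rpow (by norm_num) (by norm_num)]
    rw [show (8:ℝ) = 4 ^ ((3:ℝ)/2) by
      rw [show (4:ℝ) = 2 ^ (2:ℕ) by norm_num, ← Real.rpow_natCast 2 2,
        ← Real.rpow_mul (by norm_num)]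
      norm_num]
    rw [← Real.mul_rpow (by norm_num) (by norm_num)]
    norm_num
  have hA : (0:ℝ) < (1/3 : ℝ) ^ ((3:ℝ)/2) := Real.rpow_pos_of_pos (by norm_num) _
  have hB : (0:ℝ) < (2:ℝ) ^ ((3:ℝ)/2) := Real.rpow_pos_of_pos (by norm_num) _
  have hC : (0:ℝ) < (2/3 : ℝ) ^ ((3:ℝ)/2) := Real.rpow_pos_of_pos (by norm_num) _
  have e1 : α1sq = m / (4 * r ^ 3 * (1/3:ℝ) ^ ((3:ℝ)/2)) := by rw [h1, hkr]
  have e2 : α2sq = 2 * m / (2 ^ ((3:ℝ)/2) * r ^ 3 * (2/3:ℝ) ^ ((3:ℝ)/2)) := by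
    rw [h2, hρ32, hkr, show 1 - κ * ρ2 / 2 = 1/3 by rw [hρκ]; norm_num,
      show 1 - κ * ρ2 / 4 = 2/3 by rw [hρκ]; norm_num]
    field_simp
  constructor
  · rw [e1, e2]
    rw [div_eq_div_iff (by positivity) (by positivity)]
    linear_combination (m * r ^ 3) * h43
  refine ⟨?_, ?_⟩
  · rw [e1]; positivity
  · rw [e2]; positivity
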